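/- With the setup of the previous lemma, for any configuration c and any finite interval I containing the extension of the interval domain of c, the norm of the column satisfies ‖U_A(·,c)‖ = ∏_{i∈I} ‖δ(c_{i+N})‖. -/

import Mathlib

/-- Corollary: the `ℓ²` norm of a column of the time evolution operator of an
LQCA equals the finite product of the norms of the local images, over any
finite interval `I = [a,b]` outside of which the configuration `c` has
quiescent neighborhoods (in particular any interval containing the extension
of the interval domain of `c`). -/
theorem column_norm_eq_prod {S : Type*} [Fintype S] [DecidableEq S]
    (q : S) {r : ℕ} (hr : 1 ≤ r) (N : Fin r → ℤ) (hN : StrictMono N)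
    (δ : (Fin r → S) → EuclideanSpace ℂ S)
    (hq : ∀ x, δ (fun _ => q) x = if x = q then 1 else 0)
    (c : {c : ℤ → S // {i | c i ≠ q}.Finite}) (a b : ℤ)
    (hI : ∀ i : ℤ, i ∉ Finset.Icc a b → ∀ j, c.1 (i + N j) = q) :
    Real.sqrt (∑' d : {c : ℤ → S // {i | c i ≠ q}.Finite},
        ‖∏ᶠ i : ℤ, δ (fun j => c.1 (i + N j)) (d.1 i)‖ ^ 2)
      = ∏ i ∈ Finset.Icc a b, ‖δ fun j => c.1 (i + N j)‖ := by
  classical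
  set K := Finset.Icc a b with hK
  -- the embedding of functions on K into configurations
  set e : ((↥K → S)) → {c : ℤ → S // {i | c i ≠ q}.Finite} :=
    fun g => ⟨fun i => if h : i ∈ K then g ⟨i, h⟩ else q, by
      apply Set.Finite.subset K.finite_toSet
      intro i hi
      simp only [Set.mem_setOf_eq] at hi
      by_contra h
      exact hi (dif_neg h)⟩ with he
  have he_inj : Function.Injective e := by
    intro g₁ g₂ hgg
    funext ⟨i, hi⟩
    have := congrFun (congrArg Subtype.val hgg) i
    simpa [he, dif_pos hi] using this
  -- for each d, the mulSupport of the factors is finite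
  have hsupp : ∀ d : {c : ℤ → S // {i | c i ≠ q}.Finite},
      (Function.mulSupport fun i : ℤ => δ (fun j => c.1 (i + N j)) (d.1 i)).Finite := by
    intro d
    apply Set.Finite.subset (K.finite_toSet.union d.2)
    intro i hi
    by_contra h
    simp only [Set.mem_union, Finset.mem_coe, Set.mem_setOf_eq, not_or, not_not] at h
    apply hi
    show δ (fun j => c.1 (i + N j)) (d.1 i) = 1
    have : (fun j => c.1 (i + N j)) = fun _ => q := funext (hI i h.1)
    rw [this, hq, if_pos h.2]
  -- vanishing outside the image of e
  have hzero : ∀ d : {c : ℤ → S // {i | c i ≠ q}.Finite},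
      d ∉ Finset.image e Finset.univ →
      ‖∏ᶠ i : ℤ, δ (fun j => c.1 (i + N j)) (d.1 i)‖ ^ 2 = 0 := by
    intro d hd
    by_cases hdq : ∀ i : ℤ, i ∉ K → d.1 i = q
    · exfalso
      apply hd
      rw [Finset.mem_image]
      refine ⟨fun i => d.1 i.1, Finset.mem_univ _, ?_⟩
      apply Subtype.ext
      funext i
      by_cases h : i ∈ K
      · simp [he, dif_pos h, h]
      · simp [he, dif_neg h, (hdq i h).symm]
    · push_neg at hdq
      obtain ⟨i, hiK, hiq⟩ := hdq
      have : (∏ᶠ i : ℤ, δ (fun j => c.1 (i + N j)) (d.1 i)) = 0 := by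
        apply finprod_eq_zero _ i _ (hsupp d)
        have hc : (fun j => c.1 (i + N j)) = fun _ => q := funext (hI i hiK)
        rw [hc, hq, if_neg hiq]
      rw [this]; simp
  -- tsum reduces to the finite sum over the image
  have htsum : (∑' d : {c : ℤ → S // {i | c i ≠ q}.Finite},
        ‖∏ᶠ i : ℤ, δ (fun j => c.1 (i + N j)) (d.1 i)‖ ^ 2)
      = ∑ g : (↥K → S), ‖∏ᶠ i : ℤ, δ (fun j => c.1 (i + N j)) ((e g).1 i)‖ ^ 2 := by
    rw [tsum_eq_sum (s := Finset.image e Finset.univ) hzero,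
      Finset.sum_image (fun x _ y _ h => he_inj h)]
  rw [htsum]
  -- for d in the image, the finprod is a product over K
  have hfin : ∀ g : (↥K → S),
      (∏ᶠ i : ℤ, δ (fun j => c.1 (i + N j)) ((e g).1 i))
        = ∏ i ∈ K.attach, δ (fun j => c.1 (i.1 + N j)) (g i) := by
    intro g
    rw [finprod_eq_prod_of_mulSupport_subset _ (s := K) ?_,
      ← Finset.prod_attach K (fun i => δ (fun j => c.1 (i + N j)) ((e g).1 i))]
    · apply Finset.prod_congr rfl
      intro i _
      congr 1
      simp [he, dif_pos i.2]
    · intro i hi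
      simp only [Function.mulSupport, Set.mem_setOf_eq] at hi
      by_contra h
      apply hi
      show δ (fun j => c.1 (i + N j)) ((e g).1 i) = 1
      have hc : (fun j => c.1 (i + N j)) = fun _ => q := funext (hI i h)
      have hgi : (e g).1 i = q := dif_neg (by simpa using h)
      rw [hc, hq, hgi, if_pos rfl]
  simp only [hfin]
  -- norm of the product of complex numbers
  have : ∀ g : (↥K → S),
      ‖∏ i ∈ K.attach, δ (fun j => c.1 (i.1 + N j)) (g i)‖ ^ 2
        = ∏ i ∈ K.attach, ‖δ (fun j => c.1 (i.1 + N j)) (g i)‖ ^ 2 := by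
    intro g
    rw [norm_prod, Finset.prod_pow]
  simp only [this]
  -- swap sum and product
  have hswap : (∑ g : (↥K → S), ∏ i ∈ K.attach, ‖δ (fun j => c.1 (i.1 + N j)) (g i)‖ ^ 2)
      = ∏ i ∈ K.attach, ∑ s : S, ‖δ (fun j => c.1 (i.1 + N j)) s‖ ^ 2 := by
    simp only [Finset.attach_eq_univ]
    rw [← Finset.sum_prod_piFinset Finset.univ
      (fun (i : ↥K) s => ‖δ (fun j => c.1 (i.1 + N j)) s‖ ^ 2), Fintype.piFinset_univ]
  rw [hswap]
  have hnorm : ∀ i : ℤ, (∑ s : S, ‖δ (fun j => c.1 (i + N j)) s‖ ^ 2)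
      = ‖δ (fun j => c.1 (i + N j))‖ ^ 2 := by
    intro i
    rw [EuclideanSpace.norm_eq, Real.sq_sqrt]
    positivity
  simp only [hnorm]
  rw [Finset.prod_pow, Real.sqrt_sq (by positivity),
    Finset.prod_attach K (fun i => ‖δ fun j => c.1 (i + N j)‖)]
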